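/- Let T ∈ L(H) be an operator on a separable infinite-dimensional complex Hilbert space H. If every nonzero eigenvalue of T has finite multiplicity, i.e. for every λ ∈ ℂ with λ ≠ 0 the eigenspace Ker(T − λI) is finite-dimensional, then T is not a universal operator. -/

import Mathlib

noncomputable section

/-- Universal operator on a complex Hilbert space. -/
def IsUniversal {H : Type*} [NormedAddCommGroup H] [InnerProductSpace ℂ H]
    (U : H →L[ℂ] H) : Prop :=
  ∀ T : H →L[ℂ] H, ∃ M : Submodule ℂ H, IsClosed (M : Set H) ∧ (∀ x ∈ M, U x ∈ M) ∧
    ∃ c : ℂ, c ≠ 0 ∧ ∃ J : H ≃L[ℂ] M, ∀ x : H, U (J x : H) = c • ((J (T x) : H))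

/-- If every nonzero eigenvalue of `T` has finite multiplicity, then `T` is not universal. -/
theorem not_universal_of_finite_multiplicity {H : Type*} [NormedAddCommGroup H]
    [InnerProductSpace ℂ H] [CompleteSpace H] [TopologicalSpace.SeparableSpace H]
    (hinf : ¬ FiniteDimensional ℂ H)
    (T : H →L[ℂ] H)
    (h : ∀ z : ℂ, z ≠ 0 → FiniteDimensional ℂ (LinearMap.ker ((T - z • (1 : H →L[ℂ] H) : H →L[ℂ] H) : H →ₗ[ℂ] H))) :
    ¬ IsUniversal T := by
  intro hU
  obtain ⟨M, _hMc, _hinv, c, hc, J, hJ⟩ := hU 1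
  have hM : M ≤ LinearMap.ker ((T - c • (1 : H →L[ℂ] H) : H →L[ℂ] H) : H →ₗ[ℂ] H) := by
    intro x hx
    have hx' : x = (J (J.symm ⟨x, hx⟩) : H) := by simp
    have h2 := hJ (J.symm ⟨x, hx⟩)
    simp only [ContinuousLinearMap.one_apply] at h2
    rw [LinearMap.mem_ker]
    simp only [ContinuousLinearMap.coe_coe, ContinuousLinearMap.coe_sub', Pi.sub_apply,
      ContinuousLinearMap.coe_smul', Pi.smul_apply, ContinuousLinearMap.one_apply,
      ContinuousLinearMap.sub_apply, ContinuousLinearMap.smul_apply]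
    rw [hx', h2]
    simp [sub_self]
  haveI := h c hc
  haveI : FiniteDimensional ℂ M :=
    FiniteDimensional.of_injective (Submodule.inclusion hM) (Submodule.inclusion_injective hM)
  exact hinf (J.toLinearEquiv.symm.finiteDimensional)

end
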